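/- (Uniqueness half of Proposition 3.5.) Let G be a discrete submonoid of ℝ≥0, let (C̄, {m_{k,λ}}) be a G-gapped filtered A∞-algebra over ℤ/2 in coefficientwise form, let (D̄, {n_{k,λ}}) be a G-gapped right filtered A∞-module over it, and let 𝟏 = (𝟏_λ)_{λ∈G} be a G-gapped cyclic element of D. If b = (b_λ) and b′ = (b′_λ) are G-gapped elements of C ⊗ Λ₊ with d^b(𝟏) = 0 and d^{b′}(𝟏) = 0, then b = b′, i.e. b_λ = b′_λ for every positive λ ∈ G. -/

import Mathlib

open scoped BigOperators

/-- A *discrete submonoid* of `ℝ≥0`: a set of nonnegative reals containing `0`,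
closed under addition, and meeting every interval `[0, E]` in a finite set. -/
structure IsDiscreteSubmonoid (G : Set ℝ) : Prop where
  zero_mem : (0 : ℝ) ∈ G
  nonneg : ∀ x ∈ G, 0 ≤ x
  add_mem : ∀ x ∈ G, ∀ y ∈ G, x + y ∈ G
  finite_le : ∀ E : ℝ, {x | x ∈ G ∧ x ≤ E}.Finite

/-- `ℤ/2`-multilinearity of a family of operations `m k λ : C̄^k → C̄`, where a `k`-tuple of
elements of `C̄` is encoded as a function `ℕ → C` of which only the first `k` values matter:
`m k λ` depends only on the first `k` arguments and is additive in each of them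
(over `ℤ/2` every additive map is linear). -/
def OpsMultilinear {C : Type*} [AddCommGroup C] (m : ℕ → ℝ → (ℕ → C) → C) : Prop :=
  (∀ (k : ℕ) (lam : ℝ) (x y : ℕ → C), (∀ i < k, x i = y i) → m k lam x = m k lam y) ∧
  (∀ (k : ℕ) (lam : ℝ) (x : ℕ → C) (i : ℕ), i < k → ∀ a b : C,
    m k lam (Function.update x i (a + b)) =
      m k lam (Function.update x i a) + m k lam (Function.update x i b))

/-- `ℤ/2`-multilinearity of a family of operations `n k λ : D̄ × C̄^k → Ē`. -/
def ModOpsMultilinear {C D E : Type*} [AddCommGroup C] [AddCommGroup D] [AddCommGroup E]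
    (n : ℕ → ℝ → D → (ℕ → C) → E) : Prop :=
  (∀ (k : ℕ) (lam : ℝ) (y : D) (x x' : ℕ → C),
      (∀ i < k, x i = x' i) → n k lam y x = n k lam y x') ∧
  (∀ (k : ℕ) (lam : ℝ) (y y' : D) (x : ℕ → C),
      n k lam (y + y') x = n k lam y x + n k lam y' x) ∧
  (∀ (k : ℕ) (lam : ℝ) (y : D) (x : ℕ → C) (i : ℕ), i < k → ∀ a b : C,
    n k lam y (Function.update x i (a + b)) =
      n k lam y (Function.update x i a) + n k lam y (Function.update x i b))

/-- The tuple `(x₁, …, x_j, c, x_{j+k₂+1}, …, x_k)` obtained from `(x₁, …, x_k)` by replacing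
the `k₂` consecutive entries starting at (0-based) position `j` by the single entry `c`. -/
def insertAt {C : Type*} (x : ℕ → C) (j k₂ : ℕ) (c : C) : ℕ → C :=
  fun i => if i < j then x i else if i = j then c else x (i + k₂ - 1)

/-- A `G`-gapped filtered `A∞`-algebra over `ℤ/2` in coefficientwise form: the operations are
multilinear, `m_{0,0} = 0`, and for every `λ ∈ G` the coefficient of `T^λ` of the filtered
`A∞`-relation holds (no signs: coefficients are in `ℤ/2`). -/
def IsGappedAInfAlgebra (G : Set ℝ) {C : Type*} [AddCommGroup C] [Module (ZMod 2) C]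
    (m : ℕ → ℝ → (ℕ → C) → C) : Prop :=
  OpsMultilinear m ∧
  (∀ x : ℕ → C, m 0 0 x = 0) ∧
  (∀ lam ∈ G, ∀ (k : ℕ) (x : ℕ → C),
    (∑ᶠ (μ : ℝ) (ν : ℝ) (k₂ : ℕ) (j : ℕ)
        (_ : μ ∈ G ∧ ν ∈ G ∧ μ + ν = lam ∧ j + k₂ ≤ k),
      m (k + 1 - k₂) μ (insertAt x j k₂ (m k₂ ν fun t => x (j + t)))) = 0)

/-- A `G`-gapped right filtered `A∞`-module `(D̄, n)` over `(C̄, m)` in coefficientwise form. -/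
def IsGappedAInfModule (G : Set ℝ) {C D : Type*} [AddCommGroup C] [Module (ZMod 2) C]
    [AddCommGroup D] [Module (ZMod 2) D]
    (m : ℕ → ℝ → (ℕ → C) → C) (n : ℕ → ℝ → D → (ℕ → C) → D) : Prop :=
  ModOpsMultilinear n ∧
  (∀ lam ∈ G, ∀ (k : ℕ) (y : D) (x : ℕ → C),
    (∑ᶠ (μ : ℝ) (ν : ℝ) (ℓ : ℕ)
        (_ : μ ∈ G ∧ ν ∈ G ∧ μ + ν = lam ∧ ℓ ≤ k),
      n (k - ℓ) μ (n ℓ ν y x) fun t => x (ℓ + t))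
    +
    (∑ᶠ (μ : ℝ) (ν : ℝ) (k₂ : ℕ) (j : ℕ)
        (_ : μ ∈ G ∧ ν ∈ G ∧ μ + ν = lam ∧ j + k₂ ≤ k),
      n (k + 1 - k₂) μ y (insertAt x j k₂ (m k₂ ν fun t => x (j + t)))) = 0)

/-- A `G`-gapped *cyclic element* `𝟏 = (𝟏_λ)_{λ∈G}` of `D`:
(i) `x ↦ n_{1,0}(𝟏₀; x)` is a bijection `C̄ → D̄`, and (ii) `n_{0,0}(𝟏₀) = 0`. -/
def IsCyclicElement {C D : Type*} [AddCommGroup C] [AddCommGroup D]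
    (n : ℕ → ℝ → D → (ℕ → C) → D) (one : ℝ → D) : Prop :=
  Function.Bijective (fun x : C => n 1 0 (one 0) fun _ => x) ∧
  (∀ x : ℕ → C, n 0 0 (one 0) x = 0)

/-- The tuple `(b_{v 0}, …, b_{v (k-1)})` of values of a `G`-gapped element `b` of `C ⊗ Λ₊`
(encoded as a function `b : ℝ → C`, of which only the values at positive elements of `G`
matter), encoded as a function `ℕ → C`. -/
def bVec {C : Type*} [Zero C] (b : ℝ → C) {k : ℕ} (v : Fin k → ℝ) : ℕ → C :=
  fun t => if h : t < k then b (v ⟨t, h⟩) else 0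

/-- The Maurer–Cartan equation for a `G`-gapped element `b` of `C ⊗ Λ₊`: for every positive
`λ ∈ G`, the sum of `m_{k,μ}(b_{λ₁}, …, b_{λ_k})` over all `k ≥ 0`, `μ ∈ G` and positive
`λ₁, …, λ_k ∈ G` with `μ + λ₁ + ⋯ + λ_k = λ` vanishes. -/
def IsBoundingCochain (G : Set ℝ) {C : Type*} [AddCommGroup C]
    (m : ℕ → ℝ → (ℕ → C) → C) (b : ℝ → C) : Prop :=
  ∀ lam ∈ G, 0 < lam →
    (∑ᶠ (k : ℕ) (μ : ℝ) (v : Fin k → ℝ)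
        (_ : μ ∈ G ∧ (∀ i, v i ∈ G ∧ 0 < v i) ∧ μ + ∑ i, v i = lam),
      m k μ (bVec b v)) = 0

/-- The equation `d^b(𝟏) = 0` in coefficientwise form: for every `λ ∈ G`, the sum of
`n_{k,μ}(𝟏_ν; b_{λ₁}, …, b_{λ_k})` over all `k ≥ 0`, `μ, ν ∈ G` and positive
`λ₁, …, λ_k ∈ G` with `μ + ν + λ₁ + ⋯ + λ_k = λ` vanishes. -/
def KillsOne (G : Set ℝ) {C D : Type*} [AddCommGroup C] [AddCommGroup D]
    (n : ℕ → ℝ → D → (ℕ → C) → D) (one : ℝ → D) (b : ℝ → C) : Prop :=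
  ∀ lam ∈ G,
    (∑ᶠ (k : ℕ) (μ : ℝ) (ν : ℝ) (v : Fin k → ℝ)
        (_ : μ ∈ G ∧ ν ∈ G ∧ (∀ i, v i ∈ G ∧ 0 < v i) ∧ μ + ν + ∑ i, v i = lam),
      n k μ (one ν) (bVec b v)) = 0


private lemma finsum_extract {α M : Type*} [DecidableEq α] [AddCommMonoid M] (f : α → M) (a : α)
    (hf : (Function.support f).Finite) :
    ∑ᶠ x, f x = f a + ∑ᶠ x, if x = a then 0 else f x := by
  classical
  have h : ∀ x, f x = (if x = a then f a else 0) + (if x = a then 0 else f x) := by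
    intro x; by_cases hx : x = a <;> simp [hx]
  have h1 : (Function.support fun x => if x = a then f a else 0).Finite := by
    apply (Set.finite_singleton a).subset
    intro x hx
    simp only [Function.mem_support] at hx
    by_contra h'
    exact hx (if_neg h')
  have h2 : (Function.support fun x => if x = a then 0 else f x).Finite := by
    apply hf.subset
    intro x hx
    simp only [Function.mem_support] at hx ⊢
    intro h'
    by_cases hxa : x = a
    · rw [if_pos hxa] at hx; exact hx rfl
    · rw [if_neg hxa] at hx; exact hx h'
  rw [finsum_congr h, finsum_add_distrib h1 h2,
    finsum_eq_single (fun x => if x = a then f a else 0) a (fun x hx => if_neg hx)]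
  simp

private def Cnd (G : Set ℝ) (lam : ℝ) (k : ℕ) (μ ν : ℝ) (v : Fin k → ℝ) : Prop :=
  μ ∈ G ∧ ν ∈ G ∧ (∀ i, v i ∈ G ∧ 0 < v i) ∧ μ + ν + ∑ i, v i = lam

private noncomputable def F3 {C D : Type*} [AddCommGroup C] [AddCommGroup D] (G : Set ℝ) (lam : ℝ)
    (n : ℕ → ℝ → D → (ℕ → C) → D) (one : ℝ → D) (c : ℝ → C)
    (k : ℕ) (μ ν : ℝ) (v : Fin k → ℝ) : D :=
  ∑ᶠ (_ : Cnd G lam k μ ν v), n k μ (one ν) (bVec c v)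

private noncomputable def F2 {C D : Type*} [AddCommGroup C] [AddCommGroup D] (G : Set ℝ) (lam : ℝ)
    (n : ℕ → ℝ → D → (ℕ → C) → D) (one : ℝ → D) (c : ℝ → C)
    (k : ℕ) (μ ν : ℝ) : D :=
  ∑ᶠ v : Fin k → ℝ, F3 G lam n one c k μ ν v

private noncomputable def F1 {C D : Type*} [AddCommGroup C] [AddCommGroup D] (G : Set ℝ) (lam : ℝ)
    (n : ℕ → ℝ → D → (ℕ → C) → D) (one : ℝ → D) (c : ℝ → C)
    (k : ℕ) (μ : ℝ) : D :=
  ∑ᶠ ν : ℝ, F2 G lam n one c k μ ν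

private noncomputable def F0 {C D : Type*} [AddCommGroup C] [AddCommGroup D] (G : Set ℝ) (lam : ℝ)
    (n : ℕ → ℝ → D → (ℕ → C) → D) (one : ℝ → D) (c : ℝ → C)
    (k : ℕ) : D :=
  ∑ᶠ μ : ℝ, F1 G lam n one c k μ

private lemma key_step (G : Set ℝ) (hG : IsDiscreteSubmonoid G)
    {C D : Type*} [AddCommGroup C] [Module (ZMod 2) C] [AddCommGroup D] [Module (ZMod 2) D]
    (n : ℕ → ℝ → D → (ℕ → C) → D) (one : ℝ → D)
    (hmult : ModOpsMultilinear n)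
    (hone : IsCyclicElement n one)
    (b b' : ℝ → C) (hb : KillsOne G n one b) (hb' : KillsOne G n one b')
    (lam : ℝ) (hlam : lam ∈ G) (hpos : 0 < lam)
    (hagree : ∀ x ∈ G, 0 < x → x < lam → b x = b' x) :
    b lam = b' lam := by
  classical
  have hnn : ∀ x, x ∈ G → 0 ≤ x := hG.nonneg
  have hsum_nonneg : ∀ (k : ℕ) (v : Fin k → ℝ), (∀ i, 0 < v i) → (0:ℝ) ≤ ∑ i, v i :=
    fun k v h => Finset.sum_nonneg fun i _ => (h i).le
  have hCsum : ∀ (k : ℕ) (μ ν : ℝ) (v : Fin k → ℝ), Cnd G lam k μ ν v → ∑ i, v i ≤ lam := by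
    rintro k μ ν v ⟨h1, h2, h3, h4⟩
    have := hnn μ h1; have := hnn ν h2; linarith
  have hCv_le : ∀ (k : ℕ) (μ ν : ℝ) (v : Fin k → ℝ), Cnd G lam k μ ν v → ∀ i, v i ≤ lam := by
    intro k μ ν v hc i
    have h1 : v i ≤ ∑ j, v j :=
      Finset.single_le_sum (fun j _ => (hc.2.2.1 j).2.le) (Finset.mem_univ i)
    exact h1.trans (hCsum k μ ν v hc)
  have hvlt : ∀ (k : ℕ) (μ ν : ℝ) (v : Fin k → ℝ), Cnd G lam k μ ν v →
      ¬(k = 1 ∧ μ = 0 ∧ ν = 0) → ∀ i, v i < lam := by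
    rintro k μ ν v ⟨h1, h2, h3, h4⟩ hne i
    by_cases hk : 2 ≤ k
    · obtain ⟨j, hj⟩ : ∃ j : Fin k, j ≠ i := by
        apply Fintype.exists_ne_of_one_lt_card
        simpa using (show 1 < k by omega)
      have hmem : j ∈ Finset.univ.erase i := Finset.mem_erase.2 ⟨hj, Finset.mem_univ j⟩
      have h5 : v j ≤ ∑ t ∈ Finset.univ.erase i, v t :=
        Finset.single_le_sum (fun t _ => (h3 t).2.le) hmem
      have h6 : v i + ∑ t ∈ Finset.univ.erase i, v t = ∑ t, v t :=
        Finset.add_sum_erase _ _ (Finset.mem_univ i)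
      have h7 := (h3 j).2
      have := hnn μ h1; have := hnn ν h2
      linarith
    · have hk1 : k = 1 := by have := i.pos; omega
      subst hk1
      have hμν : 0 < μ + ν := by
        rcases lt_or_eq_of_le (hnn μ h1) with h | h
        · linarith [hnn ν h2]
        · rcases lt_or_eq_of_le (hnn ν h2) with h' | h'
          · linarith
          · exact absurd ⟨rfl, h.symm, h'.symm⟩ hne
      have h5 : v i ≤ ∑ j, v j :=
        Finset.single_le_sum (fun j _ => (h3 j).2.le) (Finset.mem_univ i)
      linarith
  have hbveq : ∀ (k : ℕ) (μ ν : ℝ) (v : Fin k → ℝ), Cnd G lam k μ ν v →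
      ¬(k = 1 ∧ μ = 0 ∧ ν = 0) → bVec b v = bVec b' v := by
    intro k μ ν v hc hne
    funext t
    unfold bVec
    split
    · exact hagree _ (hc.2.2.1 _).1 (hc.2.2.1 _).2 (hvlt k μ ν v hc hne _)
    · rfl
  have hF3 : ∀ (k : ℕ) (μ ν : ℝ) (v : Fin k → ℝ), ¬(k = 1 ∧ μ = 0 ∧ ν = 0) →
      F3 G lam n one b k μ ν v = F3 G lam n one b' k μ ν v := by
    intro k μ ν v hne
    unfold F3
    rw [finsum_eq_if, finsum_eq_if]
    by_cases hc : Cnd G lam k μ ν v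
    · rw [if_pos hc, if_pos hc, hbveq k μ ν v hc hne]
    · rw [if_neg hc, if_neg hc]
  have hne3 : ∀ (c : ℝ → C) (k : ℕ) (μ ν : ℝ) (v : Fin k → ℝ),
      F3 G lam n one c k μ ν v ≠ 0 → Cnd G lam k μ ν v := by
    intro c k μ ν v h
    by_contra hc
    exact h (by unfold F3; rw [finsum_eq_if, if_neg hc])
  have hne2 : ∀ (c : ℝ → C) (k : ℕ) (μ ν : ℝ),
      F2 G lam n one c k μ ν ≠ 0 → ∃ v, Cnd G lam k μ ν v := by
    intro c k μ ν h
    by_contra hc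
    push_neg at hc
    refine h (finsum_eq_zero_of_forall_eq_zero fun v => ?_)
    by_contra h2
    exact hc v (hne3 c k μ ν v h2)
  have hne1 : ∀ (c : ℝ → C) (k : ℕ) (μ : ℝ),
      F1 G lam n one c k μ ≠ 0 → ∃ ν v, Cnd G lam k μ ν v := by
    intro c k μ h
    by_contra hc
    push_neg at hc
    refine h (finsum_eq_zero_of_forall_eq_zero fun ν => ?_)
    by_contra h2
    obtain ⟨v, hv⟩ := hne2 c k μ ν h2
    exact hc ν v hv
  have hne0 : ∀ (c : ℝ → C) (k : ℕ),
      F0 G lam n one c k ≠ 0 → ∃ μ ν v, Cnd G lam k μ ν v := by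
    intro c k h
    by_contra hc
    push_neg at hc
    refine h (finsum_eq_zero_of_forall_eq_zero fun μ => ?_)
    by_contra h2
    obtain ⟨ν, v, hv⟩ := hne1 c k μ h2
    exact hc μ ν v hv
  have hSfin : ({x | x ∈ G ∧ x ≤ lam}).Finite := hG.finite_le lam
  have hsupν : ∀ c : ℝ → C, (Function.support (F2 G lam n one c 1 0)).Finite := by
    intro c
    apply hSfin.subset
    intro ν hν
    obtain ⟨v, hc⟩ := hne2 c 1 0 ν hν
    refine ⟨hc.2.1, ?_⟩
    have := hsum_nonneg 1 v (fun i => (hc.2.2.1 i).2)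
    have := hnn _ hc.1
    linarith [hc.2.2.2]
  have hsupμ : ∀ c : ℝ → C, (Function.support (F1 G lam n one c 1)).Finite := by
    intro c
    apply hSfin.subset
    intro μ hμ
    obtain ⟨ν, v, hc⟩ := hne1 c 1 μ hμ
    refine ⟨hc.1, ?_⟩
    have := hsum_nonneg 1 v (fun i => (hc.2.2.1 i).2)
    have := hnn _ hc.2.1
    linarith [hc.2.2.2]
  have hKfin : ({k : ℕ | ∃ μ, ∃ ν, ∃ v : Fin k → ℝ, Cnd G lam k μ ν v}).Finite := by
    have hSp : ({x | x ∈ G ∧ 0 < x ∧ x ≤ lam}).Finite :=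
      hSfin.subset (fun x hx => ⟨hx.1, hx.2.2⟩)
    rcases Set.eq_empty_or_nonempty {x | x ∈ G ∧ 0 < x ∧ x ≤ lam} with hE | hNE
    · apply (Set.finite_singleton 0).subset
      rintro k ⟨μ, ν, v, hc⟩
      simp only [Set.mem_singleton_iff]
      by_contra hk
      have hkpos : 0 < k := Nat.pos_of_ne_zero hk
      have hmem : v ⟨0, hkpos⟩ ∈ ({x | x ∈ G ∧ 0 < x ∧ x ≤ lam} : Set ℝ) :=
        ⟨(hc.2.2.1 _).1, (hc.2.2.1 _).2, hCv_le k μ ν v hc _⟩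
      rw [hE] at hmem
      exact hmem
    · obtain ⟨δ, hδmem, hδmin⟩ : ∃ δ, δ ∈ {x | x ∈ G ∧ 0 < x ∧ x ≤ lam} ∧
          ∀ x ∈ {x | x ∈ G ∧ 0 < x ∧ x ≤ lam}, δ ≤ x := by
        have hne : hSp.toFinset.Nonempty := by
          rw [Set.Finite.toFinset_nonempty]; exact hNE
        refine ⟨hSp.toFinset.min' hne, ?_, ?_⟩
        · have := hSp.toFinset.min'_mem hne
          rwa [Set.Finite.mem_toFinset] at this
        · intro x hx
          exact hSp.toFinset.min'_le x (by rwa [Set.Finite.mem_toFinset])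
      apply (Set.finite_Iic (Nat.floor (lam / δ))).subset
      rintro k ⟨μ, ν, v, hc⟩
      have hδpos : 0 < δ := hδmem.2.1
      have hk : (k : ℝ) * δ ≤ lam := by
        have h1 : Finset.univ.card • δ ≤ ∑ i, v i :=
          Finset.card_nsmul_le_sum Finset.univ v δ
            (fun i _ => hδmin _ ⟨(hc.2.2.1 i).1, (hc.2.2.1 i).2, hCv_le k μ ν v hc i⟩)
        rw [Finset.card_univ, Fintype.card_fin, nsmul_eq_mul] at h1
        linarith [hCsum k μ ν v hc]
      have hk2 : (k : ℝ) ≤ lam / δ := (le_div_iff₀ hδpos).2 hk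
      exact Set.mem_Iic.2 (Nat.le_floor hk2)
  have hsupk : ∀ c : ℝ → C, (Function.support (F0 G lam n one c)).Finite := by
    intro c
    apply hKfin.subset
    intro k hk
    exact hne0 c k hk
  have hCndl : Cnd G lam 1 0 0 (fun _ => lam) :=
    ⟨hG.zero_mem, hG.zero_mem, fun _ => ⟨hlam, hpos⟩, by simp⟩
  have hF2val : ∀ c : ℝ → C,
      F2 G lam n one c 1 0 0 = n 1 0 (one 0) (bVec c (fun _ : Fin 1 => lam)) := by
    intro c
    have hsingle : ∀ v : Fin 1 → ℝ, v ≠ (fun _ => lam) → F3 G lam n one c 1 0 0 v = 0 := by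
      intro v hv
      unfold F3
      rw [finsum_eq_if, if_neg]
      intro hc
      apply hv
      funext i
      have h4 := hc.2.2.2
      rw [Fin.sum_univ_one] at h4
      have h0 : v 0 = lam := by linarith
      have hi : i = 0 := Subsingleton.elim i 0
      rw [hi]; exact h0
    have := finsum_eq_single (F3 G lam n one c 1 0 0) (fun _ => lam) hsingle
    unfold F2
    rw [this]
    unfold F3
    rw [finsum_eq_if, if_pos hCndl]
  have hdecomp : ∀ c : ℝ → C, (∑ᶠ k, F0 G lam n one c k) =
      n 1 0 (one 0) (bVec c (fun _ : Fin 1 => lam)) +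
      ((∑ᶠ ν : ℝ, if ν = (0:ℝ) then 0 else F2 G lam n one c 1 0 ν) +
       ((∑ᶠ μ : ℝ, if μ = (0:ℝ) then 0 else F1 G lam n one c 1 μ) +
        (∑ᶠ k : ℕ, if k = 1 then 0 else F0 G lam n one c k))) := by
    intro c
    rw [finsum_extract (F0 G lam n one c) 1 (hsupk c),
      show F0 G lam n one c 1 = _ from finsum_extract (F1 G lam n one c 1) 0 (hsupμ c),
      show F1 G lam n one c 1 0 = _ from finsum_extract (F2 G lam n one c 1 0) 0 (hsupν c),
      hF2val c]
    abel
  have hR2 : (∑ᶠ ν : ℝ, if ν = (0:ℝ) then 0 else F2 G lam n one b 1 0 ν) =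
      (∑ᶠ ν : ℝ, if ν = (0:ℝ) then 0 else F2 G lam n one b' 1 0 ν) := by
    apply finsum_congr
    intro ν
    by_cases hν : ν = 0
    · simp [hν]
    · rw [if_neg hν, if_neg hν]
      unfold F2
      exact finsum_congr fun v => hF3 1 0 ν v (fun h => hν h.2.2)
  have hR1 : (∑ᶠ μ : ℝ, if μ = (0:ℝ) then 0 else F1 G lam n one b 1 μ) =
      (∑ᶠ μ : ℝ, if μ = (0:ℝ) then 0 else F1 G lam n one b' 1 μ) := by
    apply finsum_congr
    intro μ
    by_cases hμ : μ = 0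
    · simp [hμ]
    · rw [if_neg hμ, if_neg hμ]
      unfold F1 F2
      exact finsum_congr fun ν => finsum_congr fun v => hF3 1 μ ν v (fun h => hμ h.2.1)
  have hR0 : (∑ᶠ k : ℕ, if k = 1 then 0 else F0 G lam n one b k) =
      (∑ᶠ k : ℕ, if k = 1 then 0 else F0 G lam n one b' k) := by
    apply finsum_congr
    intro k
    by_cases hk : k = 1
    · simp [hk]
    · rw [if_neg hk, if_neg hk]
      unfold F0 F1 F2
      exact finsum_congr fun μ => finsum_congr fun ν => finsum_congr fun v =>
        hF3 k μ ν v (fun h => hk h.1)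
  have hFb : (∑ᶠ k, F0 G lam n one b k) = 0 := hb lam hlam
  have hFb' : (∑ᶠ k, F0 G lam n one b' k) = 0 := hb' lam hlam
  rw [hdecomp b, hR2, hR1, hR0] at hFb
  rw [hdecomp b'] at hFb'
  have hT : n 1 0 (one 0) (bVec b (fun _ : Fin 1 => lam)) = n 1 0 (one 0) (bVec b' (fun _ : Fin 1 => lam)) :=
    add_right_cancel (hFb.trans hFb'.symm)
  have hb1 : n 1 0 (one 0) (bVec b (fun _ : Fin 1 => lam)) = n 1 0 (one 0) (fun _ => b lam) := by
    apply hmult.1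
    intro i hi
    simp [bVec, hi]
  have hb1' : n 1 0 (one 0) (bVec b' (fun _ : Fin 1 => lam)) = n 1 0 (one 0) (fun _ => b' lam) := by
    apply hmult.1
    intro i hi
    simp [bVec, hi]
  have hfinal : n 1 0 (one 0) (fun _ => b lam) = n 1 0 (one 0) (fun _ => b' lam) := by
    rw [← hb1, ← hb1', hT]
  exact hone.1.injective hfinal

/-- **Uniqueness half of Proposition 3.5.** If `b` and `b'` are `G`-gapped elements of
`C ⊗ Λ₊` with `d^b(𝟏) = 0` and `d^{b'}(𝟏) = 0`, then `b_λ = b'_λ` for every positive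
`λ ∈ G`. -/
theorem fukaya_prop_3_5_uniqueness (G : Set ℝ) (hG : IsDiscreteSubmonoid G)
    {C D : Type*} [AddCommGroup C] [Module (ZMod 2) C] [AddCommGroup D] [Module (ZMod 2) D]
    (m : ℕ → ℝ → (ℕ → C) → C) (n : ℕ → ℝ → D → (ℕ → C) → D) (one : ℝ → D)
    (hm : IsGappedAInfAlgebra G m) (hn : IsGappedAInfModule G m n)
    (hone : IsCyclicElement n one)
    (b b' : ℝ → C) (hb : KillsOne G n one b) (hb' : KillsOne G n one b') :
    ∀ lam ∈ G, 0 < lam → b lam = b' lam := by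
  intro lam hlam hpos
  have main : ∀ N : ℕ, ∀ x : ℝ, x ∈ G → 0 < x →
      ({y | y ∈ G ∧ 0 < y ∧ y ≤ x}).ncard ≤ N → b x = b' x := by
    intro N
    induction N with
    | zero =>
      intro x hx hxpos hcard
      exfalso
      have hfin : ({y | y ∈ G ∧ 0 < y ∧ y ≤ x}).Finite :=
        (hG.finite_le x).subset (fun y hy => ⟨hy.1, hy.2.2⟩)
      have hmem : x ∈ {y | y ∈ G ∧ 0 < y ∧ y ≤ x} := ⟨hx, hxpos, le_refl x⟩
      have := (Set.ncard_pos hfin).2 ⟨x, hmem⟩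
      omega
    | succ N ih =>
      intro x hx hxpos hcard
      apply key_step G hG n one hn.1 hone b b' hb hb' x hx hxpos
      intro y hy hypos hylt
      apply ih y hy hypos
      have hfin : ({z | z ∈ G ∧ 0 < z ∧ z ≤ x}).Finite :=
        (hG.finite_le x).subset (fun z hz => ⟨hz.1, hz.2.2⟩)
      have hssub : {z | z ∈ G ∧ 0 < z ∧ z ≤ y} ⊂ {z | z ∈ G ∧ 0 < z ∧ z ≤ x} := by
        constructor
        · intro z hz
          exact ⟨hz.1, hz.2.1, hz.2.2.trans hylt.le⟩
        · intro hsup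
          have := hsup ⟨hx, hxpos, le_refl x⟩
          exact absurd this.2.2 (not_le.2 hylt)
      have := Set.ncard_lt_ncard hssub hfin
      omega
  exact main _ lam hlam hpos le_rfl
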